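/- Let σ₁ > σ₂ > 0. For the inhomogeneous sum S'_m = Σ_{i=1}^m Y_i with Y_i i.i.d. N(0,σ₂²), and with the recentering M(k) as below, there exists C such that for k ≤ n/4, 2^k · P( Σ_{i=1}^k X_i > M(k) + f(k) ) ≤ C k^{−3/2} e^{−(√(2 log 2)/σ₁) y}, where X_i are i.i.d. N(0,σ₁²), M(k) = (k/(n/2))(√(2 log 2)σ₁ (n/2) − (3σ₁/(2√(2 log 2))) log(n/2)) and f(k) = y + (5σ₁/(2√(2 log 2))) log k for 1 ≤ k ≤ n/4. -/

import Mathlib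

open MeasureTheory ProbabilityTheory

set_option maxHeartbeats 1000000

/-- Crude Gaussian tail bound: for `t ≥ 0`, `P(X > t) ≤ exp(-t²/(2v))`. -/
lemma gaussian_tail_aux {v : ℝ} (hv : 0 < v) {t : ℝ} (ht : 0 ≤ t) :
    ((gaussianReal 0 v.toNNReal) {x : ℝ | t < x}).toReal
      ≤ Real.exp (-t ^ 2 / (2 * v)) := by
  have hvne : v.toNNReal ≠ 0 := by
    simp only [ne_eq, Real.toNNReal_eq_zero, not_le]
    exact hv
  have hvc : ((v.toNNReal : ℝ)) = v := Real.coe_toNNReal _ hv.le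
  rw [gaussianReal_apply_eq_integral 0 hvne]
  rw [ENNReal.toReal_ofReal (integral_nonneg fun x => gaussianPDFReal_nonneg _ _ _)]
  have hmeas : MeasurableSet {x : ℝ | t < x} := measurableSet_Ioi
  have hint2 : Integrable (fun x : ℝ =>
      Real.exp (-t ^ 2 / (2 * v)) * gaussianPDFReal 0 v.toNNReal (x - t)) := by
    exact (Integrable.comp_sub_right (integrable_gaussianPDFReal 0 v.toNNReal) t).const_mul _
  calc ∫ x in {x : ℝ | t < x}, gaussianPDFReal 0 v.toNNReal x
      ≤ ∫ x in {x : ℝ | t < x},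
          Real.exp (-t ^ 2 / (2 * v)) * gaussianPDFReal 0 v.toNNReal (x - t) := by
        refine setIntegral_mono_on
          ((integrable_gaussianPDFReal 0 v.toNNReal).restrict)
          (hint2.restrict) hmeas ?_
        intro x hx
        have hx' : t < x := hx
        simp only [gaussianPDFReal, sub_zero, hvc]
        have hle : Real.exp (-x ^ 2 / (2 * v))
            ≤ Real.exp (-(x - t) ^ 2 / (2 * v)) * Real.exp (-t ^ 2 / (2 * v)) := by
          rw [← Real.exp_add, Real.exp_le_exp, ← add_div]
          gcongr
          nlinarith [mul_nonneg ht (sub_nonneg.mpr hx'.le)]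
        exact le_of_le_of_eq (mul_le_mul_of_nonneg_left hle (by positivity)) (by ring)
    _ ≤ ∫ x, Real.exp (-t ^ 2 / (2 * v)) * gaussianPDFReal 0 v.toNNReal (x - t) := by
        refine setIntegral_le_integral hint2 ?_
        exact Filter.Eventually.of_forall fun x =>
          mul_nonneg (Real.exp_nonneg _) (gaussianPDFReal_nonneg _ _ _)
    _ = Real.exp (-t ^ 2 / (2 * v)) *
          ∫ x, gaussianPDFReal 0 v.toNNReal (x - t) := integral_const_mul _ _
    _ = Real.exp (-t ^ 2 / (2 * v)) := by
        rw [integral_sub_right_eq_self (gaussianPDFReal 0 v.toNNReal) t,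
          integral_gaussianPDFReal_eq_one 0 hvne, mul_one]

/-- `log x ≤ x / e` for `x > 0`. -/
lemma log_le_div_e {x : ℝ} (hx : 0 < x) : Real.log x ≤ x / Real.exp 1 := by
  have h := Real.log_le_sub_one_of_pos (x := x / Real.exp 1) (by positivity)
  rw [Real.log_div hx.ne' (Real.exp_ne_zero 1), Real.log_exp] at h
  linarith

/-- first-regime estimate in the decreasing variances upper bound.
Here n = 4m (so k ≤ n/4 = m and n/2 = 2m); Σ_{i≤k} X_i ~ N(0, kσ₁²). -/
theorem stmt12 (σ1 σ2 : ℝ) (h2 : 0 < σ2) (h12 : σ2 < σ1) :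
    ∃ C : ℝ, 0 < C ∧ ∀ m : ℕ, 1 ≤ m → ∀ y : ℝ, 0 < y → ∀ k : ℕ, 1 ≤ k → k ≤ m →
      (2:ℝ)^k *
        ((gaussianReal 0 (Real.toNNReal ((k:ℝ)*σ1^2)))
          {x : ℝ |
            ((k:ℝ)/(2*m)) * (Real.sqrt (2*Real.log 2)*σ1*(2*m)
              - (3*σ1/(2*Real.sqrt (2*Real.log 2))) * Real.log (2*m))
            + (y + (5*σ1/(2*Real.sqrt (2*Real.log 2))) * Real.log k) < x}).toReal
      ≤ C * ((k:ℝ)^(-(3:ℝ)/2)) * Real.exp (-(Real.sqrt (2*Real.log 2)/σ1) * y) := by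
  have hlog2 : 0 < Real.log 2 := Real.log_pos one_lt_two
  obtain ⟨L, hLdef⟩ : ∃ L : ℝ, L = Real.sqrt (2 * Real.log 2) := ⟨_, rfl⟩
  rw [← hLdef]
  have hL : 0 < L := hLdef ▸ Real.sqrt_pos.mpr (by linarith)
  have hL2 : L ^ 2 = 2 * Real.log 2 := hLdef ▸ Real.sq_sqrt (by linarith)
  have hσ : 0 < σ1 := h2.trans h12
  have he : (2.7182818283 : ℝ) < Real.exp 1 := Real.exp_one_gt_d9
  have hlog2' : (0.6931471803 : ℝ) < Real.log 2 := Real.log_two_gt_d9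
  refine ⟨Real.exp 1, Real.exp_pos 1, ?_⟩
  intro m hm y hy k hk hkm
  have hk0 : (0:ℝ) < k := by exact_mod_cast hk
  have hm0 : (0:ℝ) < m := by exact_mod_cast (Nat.lt_of_lt_of_le Nat.zero_lt_one hm)
  have hkm' : (k:ℝ) ≤ m := by exact_mod_cast hkm
  have hlogk : 0 ≤ Real.log k := Real.log_nonneg (by exact_mod_cast hk)
  obtain ⟨b, hbdef⟩ : ∃ b : ℝ, b = y + (5*σ1/(2*L)) * Real.log k
      - (3*σ1/(2*L)) * (((k:ℝ)/(2*m)) * Real.log (2*m)) := ⟨_, rfl⟩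
  obtain ⟨t, htdef⟩ : ∃ t : ℝ, t = L * σ1 * k + b := ⟨_, rfl⟩
  have hT : ((k:ℝ)/(2*m)) * (L*σ1*(2*m) - (3*σ1/(2*L)) * Real.log (2*m))
      + (y + (5*σ1/(2*L)) * Real.log k) = t := by
    rw [htdef, hbdef]
    field_simp
    ring
  -- log(2m) ≤ 2m / e
  have hlog2m : Real.log (2*m) ≤ 2*m / Real.exp 1 := log_le_div_e (by positivity)
  -- (k/(2m)) * log(2m) ≤ k / e
  have h1 : ((k:ℝ)/(2*m)) * Real.log (2*m) ≤ (k:ℝ) / Real.exp 1 := by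
    calc ((k:ℝ)/(2*m)) * Real.log (2*m) ≤ ((k:ℝ)/(2*m)) * (2*m / Real.exp 1) :=
          mul_le_mul_of_nonneg_left hlog2m (by positivity)
      _ = (k:ℝ) / Real.exp 1 := by field_simp
  -- t ≥ 0
  have ht0 : 0 ≤ t := by
    rw [htdef, hbdef]
    have h2e : (3*σ1/(2*L)) * (((k:ℝ)/(2*m)) * Real.log (2*m))
        ≤ (3*σ1/(2*L)) * ((k:ℝ) / Real.exp 1) :=
      mul_le_mul_of_nonneg_left h1 (by positivity)
    have hnum : (3*σ1/(2*L)) * ((k:ℝ) / Real.exp 1) ≤ L * σ1 * k := by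
      rw [div_mul_div_comm, div_le_iff₀ (by positivity)]
      have hscal : (3:ℝ) ≤ 4 * Real.log 2 * Real.exp 1 := by nlinarith
      have hR : L * σ1 * (k:ℝ) * (2*L*Real.exp 1)
          = 2 * L ^ 2 * (σ1 * k * Real.exp 1) := by ring
      rw [hR, hL2]
      nlinarith [mul_pos hσ hk0, Real.exp_pos 1]
    nlinarith [mul_nonneg (le_of_lt (by positivity : (0:ℝ) < 5*σ1/(2*L))) hlogk]
  -- variance
  have hv : (0:ℝ) < (k:ℝ) * σ1 ^ 2 := by positivity
  -- tail bound
  have htail := gaussian_tail_aux hv ht0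
  -- rewrite the set
  have hset : {x : ℝ | ((k:ℝ)/(2*m)) * (L*σ1*(2*m) - (3*σ1/(2*L)) * Real.log (2*m))
      + (y + (5*σ1/(2*L)) * Real.log k) < x} = {x : ℝ | t < x} := by
    ext x; simp only [Set.mem_setOf_eq, hT]
  rw [hset]
  -- exponent bound: t²/(2kσ1²) ≥ L²k/2 + (L/σ1) b
  have hexp : L ^ 2 * k / 2 + (L/σ1) * b ≤ t ^ 2 / (2 * ((k:ℝ) * σ1 ^ 2)) := by
    rw [le_div_iff₀ (by positivity)]
    rw [htdef]
    have heq2 : (L ^ 2 * ↑k / 2 + L / σ1 * b) * (2 * (↑k * σ1 ^ 2))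
        = L ^ 2 * σ1 ^ 2 * (k:ℝ) ^ 2 + 2 * L * σ1 * k * b := by
      field_simp
    rw [heq2]
    nlinarith [sq_nonneg b]
  -- 2^k = exp(L²k/2)
  have h2k : (2:ℝ) ^ k = Real.exp (L ^ 2 * k / 2) := by
    rw [hL2]
    rw [show (2:ℝ) * Real.log 2 * k / 2 = (k:ℝ) * Real.log 2 by ring]
    rw [Real.exp_nat_mul, Real.exp_log two_pos]
  -- key inequality for the k^{-3/2} factor
  have hkey : (3/2) * (((k:ℝ)/(2*m)) * Real.log (2*m)) ≤ 1 + Real.log k := by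
    have hsplit : Real.log (2*m) = Real.log (2*m/(k:ℝ)) + Real.log k := by
      rw [← Real.log_mul (by positivity) hk0.ne']
      congr 1
      field_simp
    have hlogq : Real.log (2*m/(k:ℝ)) ≤ (2*m/(k:ℝ)) / Real.exp 1 :=
      log_le_div_e (by positivity)
    have ha : ((k:ℝ)/(2*m)) * Real.log (2*m/(k:ℝ)) ≤ 1 / Real.exp 1 := by
      calc ((k:ℝ)/(2*m)) * Real.log (2*m/(k:ℝ))
          ≤ ((k:ℝ)/(2*m)) * ((2*m/(k:ℝ)) / Real.exp 1) :=
            mul_le_mul_of_nonneg_left hlogq (by positivity)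
        _ = 1 / Real.exp 1 := by field_simp
    have hb' : ((k:ℝ)/(2*m)) * Real.log k ≤ (1/2) * Real.log k := by
      refine mul_le_mul_of_nonneg_right ?_ hlogk
      rw [div_le_iff₀ (by positivity)]
      linarith
    have h3 : (3:ℝ)/2 * (1 / Real.exp 1) ≤ 1 := by
      rw [show (3:ℝ)/2 * (1 / Real.exp 1) = 3/(2*Real.exp 1) by ring,
        div_le_one (by positivity)]
      nlinarith
    rw [hsplit, mul_add]
    have h4 : (3/2 : ℝ) * (((k:ℝ)/(2*m)) * Real.log (2*m/(k:ℝ))) ≤ 3/2 * (1/Real.exp 1) :=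
      mul_le_mul_of_nonneg_left ha (by norm_num)
    nlinarith [hb']
  -- expansion of (L/σ1)*b
  have hbexp : (L/σ1) * b = (L/σ1) * y + (5/2) * Real.log k
      - (3/2) * (((k:ℝ)/(2*m)) * Real.log (2*m)) := by
    rw [hbdef]
    field_simp
  -- final chain
  calc (2:ℝ)^k * ((gaussianReal 0 (Real.toNNReal ((k:ℝ)*σ1^2))) {x : ℝ | t < x}).toReal
      ≤ (2:ℝ)^k * Real.exp (-t ^ 2 / (2 * ((k:ℝ) * σ1 ^ 2))) := by
        exact mul_le_mul_of_nonneg_left htail (by positivity)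
    _ = Real.exp (L ^ 2 * k / 2 + -t ^ 2 / (2 * ((k:ℝ) * σ1 ^ 2))) := by
        rw [h2k, ← Real.exp_add]
    _ ≤ Real.exp (1 + (-(3:ℝ)/2) * Real.log k + (-(L/σ1)) * y) := by
        refine Real.exp_le_exp.mpr ?_
        have h4 : -t ^ 2 / (2 * ((k:ℝ) * σ1 ^ 2))
            ≤ -(L ^ 2 * k / 2) - (L/σ1) * b := by
          rw [neg_div]
          linarith
        have h5 : -((L/σ1) * b) ≤ 1 + (-(3:ℝ)/2) * Real.log k + (-(L/σ1)) * y := by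
          rw [hbexp]
          nlinarith [hkey]
        linarith
    _ = Real.exp 1 * ((k:ℝ)^(-(3:ℝ)/2)) * Real.exp (-(L/σ1) * y) := by
        rw [Real.exp_add, Real.exp_add]
        congr 1
        congr 1
        rw [Real.rpow_def_of_pos hk0, mul_comm]
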